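/- Let R_m = ℂ[z_0, …, z_{m-1}], let Z_0(u) = ∑_{i=0}^{m-1} z_i u^{i+1} ∈ R_m[u], and let J_m be the ideal of R_m generated by all coefficients (Z_0(u)^r)_s of u^s in Z_0(u)^r for r ≥ 1 and s ≥ m + 1. Setting Z_1(u) = ∑_{i=1}^{m-1} z_i u^i, every coefficient (Z_1(u)^r)_s with r ≥ 1 and s ≥ m lies in J_m. -/

import Mathlib

open Polynomial

/-- `Z₀(u) = ∑_{i=0}^{m-1} z_i u^{i+1}` in `R_m[u]`, `R_m = ℂ[z_0,…,z_{m-1}]`. -/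
noncomputable def Zzero (m : ℕ) : Polynomial (MvPolynomial (Fin m) ℂ) :=
  ∑ i : Fin m, Polynomial.C (MvPolynomial.X i) * Polynomial.X ^ ((i : ℕ) + 1)

/-- `Z₁(u) = ∑_{i=1}^{m-1} z_i u^i`. -/
noncomputable def Zone (m : ℕ) : Polynomial (MvPolynomial (Fin m) ℂ) :=
  ∑ i ∈ Finset.univ.filter (fun i : Fin m => 1 ≤ (i : ℕ)),
    Polynomial.C (MvPolynomial.X i) * Polynomial.X ^ (i : ℕ)

/-- The ideal `J_m` generated by the coefficients `(Z₀(u)^r)_s` for `r ≥ 1`, `s ≥ m+1`. -/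
noncomputable def Jm (m : ℕ) : Ideal (MvPolynomial (Fin m) ℂ) :=
  Ideal.span {x | ∃ r s : ℕ, 1 ≤ r ∧ m + 1 ≤ s ∧ x = ((Zzero m) ^ r).coeff s}

/-- Factorization `Z₀(u) = u·(z₀ + Z₁(u))`. -/
lemma factor (m : ℕ) (hm : 0 < m) :
    Zzero m = Polynomial.X * (Polynomial.C (MvPolynomial.X (⟨0, hm⟩ : Fin m)) + Zone m) := by
  rw [Zzero, Zone, mul_add, Finset.mul_sum]
  rw [← Finset.sum_filter_add_sum_filter_not Finset.univ (fun i : Fin m => 1 ≤ (i : ℕ))]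
  have h2 : Finset.univ.filter (fun i : Fin m => ¬ 1 ≤ (i : ℕ)) = {(⟨0, hm⟩ : Fin m)} := by
    ext i
    simp [Fin.ext_iff, Nat.lt_one_iff]
  rw [h2, Finset.sum_singleton, add_comm]
  refine congrArg₂ (· + ·) ?_ ?_
  · simp
  · exact Finset.sum_congr rfl fun i _ => by ring

/-- every coefficient `(Z₁(u)^r)_s` with `r ≥ 1` and `s ≥ m` lies in `J_m`. -/
theorem stmt_9 (m : ℕ) (r s : ℕ) (hr : 1 ≤ r) (hs : m ≤ s) :
    ((Zone m) ^ r).coeff s ∈ Jm m := by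
  rcases Nat.eq_zero_or_pos m with hm | hm
  · subst hm
    have h0 : Zone 0 = 0 := by simp [Zone]
    rw [h0, zero_pow (by omega : r ≠ 0)]
    simp
  · set z0 : MvPolynomial (Fin m) ℂ := MvPolynomial.X (⟨0, hm⟩ : Fin m) with hz0
    set P : Polynomial (MvPolynomial (Fin m) ℂ) := Polynomial.C z0 + Zone m with hP
    have hZ : Zone m = P + (-Polynomial.C z0) := by rw [hP]; ring
    rw [hZ, add_pow, Polynomial.finset_sum_coeff]
    apply Ideal.sum_mem
    intro k hk
    have hterm : (P ^ k * (-Polynomial.C z0) ^ (r - k) *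
        ((r.choose k : ℕ) : Polynomial (MvPolynomial (Fin m) ℂ))).coeff s
        = (P ^ k).coeff s * ((-z0) ^ (r - k) * ((r.choose k : ℕ) : MvPolynomial (Fin m) ℂ)) := by
      rw [← Polynomial.C_eq_natCast, ← map_neg Polynomial.C, ← map_pow, mul_assoc, ← map_mul,
        Polynomial.coeff_mul_C]
    rw [hterm]
    rcases Nat.eq_zero_or_pos k with hk0 | hk1
    · subst hk0
      have : (P ^ 0).coeff s = 0 := by
        rw [pow_zero, Polynomial.coeff_one]
        simp only [if_neg (by omega : ¬ s = 0)]
      rw [this, zero_mul]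
      exact Ideal.zero_mem _
    · apply Ideal.mul_mem_right
      apply Ideal.subset_span
      refine ⟨k, s + k, hk1, by omega, ?_⟩
      have : (Zzero m) ^ k = Polynomial.X ^ k * P ^ k := by
        rw [factor m hm, mul_pow, hP]
      rw [this, Polynomial.coeff_X_pow_mul]
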